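/- In U(N₋) with generators X,Y,Z,U,V,W satisfying [X,Y] = -U, [Y,Z] = -V, [X,V] = -W, [U,Z] = -W and all other brackets of generators zero, the element H̃ = (1/2)(X² + Y² + Z²) satisfies: [H̃, W] = 0 and [H̃, UV − YW] = 0. -/

import Mathlib

open Matrix

attribute [local instance 100] LieRing.ofAssociativeRing

noncomputable def E (i j : Fin 4) : Matrix (Fin 4) (Fin 4) ℝ := Matrix.single i j 1

lemma mul_lower {A B : Matrix (Fin 4) (Fin 4) ℝ}
    (hA : ∀ i j : Fin 4, i ≤ j → A i j = 0) (hB : ∀ i j : Fin 4, i ≤ j → B i j = 0) :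
    ∀ i j : Fin 4, i ≤ j → (A * B) i j = 0 := by
  intro i j hij
  rw [Matrix.mul_apply]
  apply Finset.sum_eq_zero
  intro k _
  rcases le_or_gt i k with h | h
  · rw [hA i k h, zero_mul]
  · rw [hB k j (le_trans h.le hij), mul_zero]

/-- The Lie algebra `N₋` of strictly lower triangular 4×4 real matrices. -/
noncomputable def NL : LieSubalgebra ℝ (Matrix (Fin 4) (Fin 4) ℝ) where
  carrier := {A | ∀ i j : Fin 4, i ≤ j → A i j = 0}
  add_mem' := fun hA hB i j hij => by simp [hA i j hij, hB i j hij]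
  zero_mem' := fun i j _ => rfl
  smul_mem' := fun c A hA i j hij => by simp [hA i j hij]
  lie_mem' := fun {A B} hA hB i j hij => by
    show (A * B - B * A) i j = 0
    simp [mul_lower hA hB i j hij, mul_lower hB hA i j hij]

lemma E_mem {a b : Fin 4} (h : b < a) : E a b ∈ NL := by
  intro i j hij
  show Matrix.single a b 1 i j = 0
  by_cases hab : a = i ∧ b = j
  · obtain ⟨h1, h2⟩ := hab; subst h1; subst h2
    exact absurd hij (not_le.mpr h)
  · simp [Matrix.single, Matrix.of_apply, hab]

noncomputable abbrev UN := UniversalEnvelopingAlgebra ℝ NL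
noncomputable def ι : NL →ₗ⁅ℝ⁆ UN := UniversalEnvelopingAlgebra.ι ℝ

/- The generators `X = E21, Y = E32, Z = E43, U = E31, V = E42, W = E41` of `U(N₋)`. -/
noncomputable def uX : UN := ι ⟨E 1 0, E_mem (by decide)⟩
noncomputable def uY : UN := ι ⟨E 2 1, E_mem (by decide)⟩
noncomputable def uZ : UN := ι ⟨E 3 2, E_mem (by decide)⟩
noncomputable def uU : UN := ι ⟨E 2 0, E_mem (by decide)⟩
noncomputable def uV : UN := ι ⟨E 3 1, E_mem (by decide)⟩
noncomputable def uW : UN := ι ⟨E 3 0, E_mem (by decide)⟩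

/-- The quantized subRiemannian Hamiltonian `H̃ = (1/2)(X² + Y² + Z²)` in `U(N₋)`. -/
noncomputable def uH : UN := (1 / 2 : ℝ) • (uX ^ 2 + uY ^ 2 + uZ ^ 2)

/- ### Auxiliary commutator machinery -/

lemma brkt (a b : NL) : ι a * ι b - ι b * ι a = ι ⁅a,b⁆ := by
  rw [LieHom.map_lie]; rfl

lemma gen_rel (a b : NL) (c : UN) (h : ι ⁅a,b⁆ = c) : ι a * ι b = ι b * ι a + c := by
  rw [← h, ← brkt a b]; abel

lemma gen_comm (a b : NL) (h : ι ⁅a,b⁆ = 0) : ι a * ι b = ι b * ι a := by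
  have := gen_rel a b 0 h; rwa [add_zero] at this

/- Base relations, all oriented with the order X < Y < Z < U < V < W. -/

lemma rYX : uY * uX = uX * uY + uU := by
  apply gen_rel
  have : (⁅(⟨E 2 1, E_mem (by decide)⟩ : NL), (⟨E 1 0, E_mem (by decide)⟩ : NL)⁆ : NL)
      = ⟨E 2 0, E_mem (by decide)⟩ := by
    apply Subtype.ext
    show ⁅E 2 1, E 1 0⁆ = E 2 0
    rw [Ring.lie_def]
    simp [E, Matrix.single_mul_single_same, Matrix.single_mul_single_of_ne]
  rw [this]; rfl

lemma rZY : uZ * uY = uY * uZ + uV := by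
  apply gen_rel
  have : (⁅(⟨E 3 2, E_mem (by decide)⟩ : NL), (⟨E 2 1, E_mem (by decide)⟩ : NL)⁆ : NL)
      = ⟨E 3 1, E_mem (by decide)⟩ := by
    apply Subtype.ext
    show ⁅E 3 2, E 2 1⁆ = E 3 1
    rw [Ring.lie_def]
    simp [E, Matrix.single_mul_single_same, Matrix.single_mul_single_of_ne]
  rw [this]; rfl

lemma rVX : uV * uX = uX * uV + uW := by
  apply gen_rel
  have : (⁅(⟨E 3 1, E_mem (by decide)⟩ : NL), (⟨E 1 0, E_mem (by decide)⟩ : NL)⁆ : NL)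
      = ⟨E 3 0, E_mem (by decide)⟩ := by
    apply Subtype.ext
    show ⁅E 3 1, E 1 0⁆ = E 3 0
    rw [Ring.lie_def]
    simp [E, Matrix.single_mul_single_same, Matrix.single_mul_single_of_ne]
  rw [this]; rfl

lemma rUZ : uU * uZ = uZ * uU + -uW := by
  have h : uZ * uU = uU * uZ + uW := by
    apply gen_rel
    have : (⁅(⟨E 3 2, E_mem (by decide)⟩ : NL), (⟨E 2 0, E_mem (by decide)⟩ : NL)⁆ : NL)
        = ⟨E 3 0, E_mem (by decide)⟩ := by
      apply Subtype.ext
      show ⁅E 3 2, E 2 0⁆ = E 3 0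
      rw [Ring.lie_def]
      simp [E, Matrix.single_mul_single_same, Matrix.single_mul_single_of_ne]
    rw [this]; rfl
  rw [h]; abel

section commrels

/-- Tactic-free helper for commuting generators. -/
lemma ugen_comm_of (a b : NL) (h : (a : Matrix (Fin 4) (Fin 4) ℝ) * b = 0)
    (h' : (b : Matrix (Fin 4) (Fin 4) ℝ) * a = 0) : ι a * ι b = ι b * ι a := by
  apply gen_comm
  have : (⁅a, b⁆ : NL) = 0 := by
    apply Subtype.ext
    show (a : Matrix (Fin 4) (Fin 4) ℝ) * b - b * a = 0
    rw [h, h', sub_zero]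
  rw [this, map_zero]

lemma rZX : uZ * uX = uX * uZ := by
  apply ugen_comm_of <;>
    simp [E, Matrix.single_mul_single_of_ne]

lemma rUX : uU * uX = uX * uU := by
  apply ugen_comm_of <;>
    simp [E, Matrix.single_mul_single_of_ne]

lemma rUY : uU * uY = uY * uU := by
  apply ugen_comm_of <;>
    simp [E, Matrix.single_mul_single_of_ne]

lemma rVY : uV * uY = uY * uV := by
  apply ugen_comm_of <;>
    simp [E, Matrix.single_mul_single_of_ne]

lemma rVZ : uV * uZ = uZ * uV := by
  apply ugen_comm_of <;>
    simp [E, Matrix.single_mul_single_of_ne]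

lemma rWX : uW * uX = uX * uW := by
  apply ugen_comm_of <;>
    simp [E, Matrix.single_mul_single_of_ne]

lemma rWY : uW * uY = uY * uW := by
  apply ugen_comm_of <;>
    simp [E, Matrix.single_mul_single_of_ne]

lemma rWZ : uW * uZ = uZ * uW := by
  apply ugen_comm_of <;>
    simp [E, Matrix.single_mul_single_of_ne]

lemma rVU : uV * uU = uU * uV := by
  apply ugen_comm_of <;>
    simp [E, Matrix.single_mul_single_of_ne]

lemma rWU : uW * uU = uU * uW := by
  apply ugen_comm_of <;>
    simp [E, Matrix.single_mul_single_of_ne]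

lemma rWV : uW * uV = uV * uW := by
  apply ugen_comm_of <;>
    simp [E, Matrix.single_mul_single_of_ne]

end commrels

/- Shifted variants used by `simp` for normal ordering inside longer products. -/

lemma shift {a b c : UN} (h : b * a = a * b + c) (t : UN) :
    b * (a * t) = a * (b * t) + c * t := by
  rw [← mul_assoc, h, add_mul, mul_assoc]

lemma shift0 {a b : UN} (h : b * a = a * b) (t : UN) :
    b * (a * t) = a * (b * t) := by
  rw [← mul_assoc, h, mul_assoc]

lemma sYX : ∀ t, uY * (uX * t) = uX * (uY * t) + uU * t := shift rYX
lemma sZY : ∀ t, uZ * (uY * t) = uY * (uZ * t) + uV * t := shift rZY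
lemma sVX : ∀ t, uV * (uX * t) = uX * (uV * t) + uW * t := shift rVX
lemma sUZ : ∀ t, uU * (uZ * t) = uZ * (uU * t) + -uW * t := shift rUZ
lemma sZX : ∀ t, uZ * (uX * t) = uX * (uZ * t) := shift0 rZX
lemma sUX : ∀ t, uU * (uX * t) = uX * (uU * t) := shift0 rUX
lemma sUY : ∀ t, uU * (uY * t) = uY * (uU * t) := shift0 rUY
lemma sVY : ∀ t, uV * (uY * t) = uY * (uV * t) := shift0 rVY
lemma sVZ : ∀ t, uV * (uZ * t) = uZ * (uV * t) := shift0 rVZ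
lemma sWX : ∀ t, uW * (uX * t) = uX * (uW * t) := shift0 rWX
lemma sWY : ∀ t, uW * (uY * t) = uY * (uW * t) := shift0 rWY
lemma sWZ : ∀ t, uW * (uZ * t) = uZ * (uW * t) := shift0 rWZ
lemma sVU : ∀ t, uV * (uU * t) = uU * (uV * t) := shift0 rVU
lemma sWU : ∀ t, uW * (uU * t) = uU * (uW * t) := shift0 rWU
lemma sWV : ∀ t, uW * (uV * t) = uV * (uW * t) := shift0 rWV

lemma smul_reduce (A : UN) (h : (uX ^ 2 + uY ^ 2 + uZ ^ 2) * A - A * (uX ^ 2 + uY ^ 2 + uZ ^ 2) = 0) :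
    uH * A - A * uH = 0 := by
  unfold uH
  rw [smul_mul_assoc, mul_smul_comm, ← smul_sub, h, smul_zero]

/-- In `U(N₋)` (generators `X,Y,Z,U,V,W` with `[X,Y] = -U`, `[Y,Z] = -V`,
`[X,V] = [U,Z] = -W`, other generator brackets zero), the quantized Hamiltonian
`H̃ = (1/2)(X² + Y² + Z²)` satisfies `[H̃, W] = 0` and `[H̃, UV − YW] = 0`. -/
theorem stmt15 :
    uH * uW - uW * uH = 0 ∧
    uH * (uU * uV - uY * uW) - (uU * uV - uY * uW) * uH = 0 := by
  constructor
  · apply smul_reduce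
    simp only [sq, sub_mul, mul_sub, add_mul, mul_add, mul_assoc,
      rYX, rZY, rVX, rUZ, rZX, rUX, rUY, rVY, rVZ, rWX, rWY, rWZ, rVU, rWU, rWV,
      sYX, sZY, sVX, sUZ, sZX, sUX, sUY, sVY, sVZ, sWX, sWY, sWZ, sVU, sWU, sWV,
      neg_mul, mul_neg]
    abel
  · apply smul_reduce
    simp only [sq, sub_mul, mul_sub, add_mul, mul_add, mul_assoc,
      rYX, rZY, rVX, rUZ, rZX, rUX, rUY, rVY, rVZ, rWX, rWY, rWZ, rVU, rWU, rWV,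
      sYX, sZY, sVX, sUZ, sZX, sUX, sUY, sVY, sVZ, sWX, sWY, sWZ, sVU, sWU, sWV,
      neg_mul, mul_neg]
    abel
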